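/- (Palindromic periodicity of the anthyphairesis of √N to 1, the theorem the paper identifies as Theaetetus' discovery in Theaetetus 147c–148b.) Let N : ℕ with 2 ≤ N and N not a perfect square, and let e be the anthyphairesis remainder sequence of (Real.sqrt N, 1). Then e n ≠ 0 for all n, and there exists n : ℕ with 1 ≤ n such that, writing I k = ⌊e k / e (k+1)⌋: (i) for every k ≥ 1, I (k + n) = I k (periodicity with period n from the first step); (ii) I n = 2 * I 0 (the last quotient of the period is double the initial quotient); and (iii) for every j with 1 ≤ j and j < n, I j = I (n − j) (the period without its final term is a palindrome). -/

import Mathlib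

noncomputable def anthStep (N : ℕ) (p : ℤ × ℤ) : ℤ × ℤ :=
  (⌊((p.1 : ℝ) + Real.sqrt N) / (p.2 : ℝ)⌋ * p.2 - p.1,
   ((N : ℤ) - (⌊((p.1 : ℝ) + Real.sqrt N) / (p.2 : ℝ)⌋ * p.2 - p.1) ^ 2) / p.2)

noncomputable def anthPQ (N : ℕ) : ℕ → ℤ × ℤ
  | 0 => (0, 1)
  | k + 1 => anthStep N (anthPQ N k)

noncomputable def aP (N : ℕ) (k : ℕ) : ℤ := (anthPQ N k).1
noncomputable def aQ (N : ℕ) (k : ℕ) : ℤ := (anthPQ N k).2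
noncomputable def aa (N : ℕ) (k : ℕ) : ℤ := ⌊((aP N k : ℝ) + Real.sqrt N) / (aQ N k : ℝ)⌋
noncomputable def ar (N : ℕ) (k : ℕ) : ℝ := ((aP N k : ℝ) + Real.sqrt N) / (aQ N k : ℝ)
noncomputable def ar' (N : ℕ) (k : ℕ) : ℝ := ((aP N k : ℝ) - Real.sqrt N) / (aQ N k : ℝ)

lemma aP_zero (N : ℕ) : aP N 0 = 0 := rfl
lemma aQ_zero (N : ℕ) : aQ N 0 = 1 := rfl
lemma aP_succ (N k : ℕ) : aP N (k+1) = aa N k * aQ N k - aP N k := rfl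
lemma aQ_succ (N k : ℕ) : aQ N (k+1) = ((N : ℤ) - (aP N (k+1)) ^ 2) / aQ N k := rfl

lemma anth_ne (x : ℝ) (n P : ℤ) (hx : x ^ 2 = (n : ℝ)) (h : n ≠ P ^ 2) :
    x - (P : ℝ) ≠ 0 := by
  intro h0
  apply h
  have hxP : x = (P : ℝ) := by linarith
  have : ((n : ℤ) : ℝ) = ((P ^ 2 : ℤ) : ℝ) := by push_cast; rw [← hx, hxP]
  exact_mod_cast this

lemma anth_key (x : ℝ) (n P q q' : ℤ) (hx : x ^ 2 = (n : ℝ)) (hq : (q : ℝ) ≠ 0)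
    (hq' : (q' : ℝ) ≠ 0) (hrel : q * q' = n - P ^ 2) :
    ((P : ℝ) + x) / (q' : ℝ) = (q : ℝ) / (x - P) := by
  have hne : n ≠ P ^ 2 := by
    intro hE
    rw [hE] at hrel
    simp at hrel
    rcases hrel with h | h <;> simp [h] at hq hq'
  have hxP : x - (P : ℝ) ≠ 0 := anth_ne x n P hx hne
  have hcast : (q : ℝ) * (q' : ℝ) = (n : ℝ) - (P : ℝ) ^ 2 := by exact_mod_cast hrel
  rw [div_eq_div_iff hq' hxP]
  linear_combination hx - hcast

lemma anth_unique (x : ℝ) (hirr : Irrational x) (P q P' q' : ℤ) (hq : (q : ℝ) ≠ 0)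
    (hq' : (q' : ℝ) ≠ 0) (h : ((P : ℝ) + x) / q = ((P' : ℝ) + x) / q') :
    P = P' ∧ q = q' := by
  rw [div_eq_div_iff hq hq'] at h
  by_cases hqq : q = q'
  · subst hqq
    refine ⟨?_, rfl⟩
    have h2 : (P : ℝ) + x = (P' : ℝ) + x := mul_right_cancel₀ hq h
    have : ((P : ℝ)) = P' := by linarith
    exact_mod_cast this
  · exfalso
    have hd : ((q' : ℝ)) - q ≠ 0 := by
      intro h0
      apply hqq
      have : (q : ℝ) = q' := by linarith
      exact_mod_cast this
    have hx : x = ((P' * q - P * q' : ℤ) : ℝ) / ((q' - q : ℤ) : ℝ) := by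
      push_cast
      field_simp
      linarith [h]
    exact hirr ⟨((P' * q - P * q' : ℤ) : ℚ) / ((q' - q : ℤ) : ℚ), by rw [hx]; push_cast; ring⟩

lemma sqrtN_irr (N : ℕ) (hnsq : ¬ ∃ m : ℕ, N = m * m) : Irrational (Real.sqrt N) :=
  irrational_sqrt_natCast_iff.mpr (fun ⟨m, hm⟩ => hnsq ⟨m, hm⟩)

lemma NneSq (N : ℕ) (hnsq : ¬ ∃ m : ℕ, N = m * m) : ∀ m : ℤ, (N : ℤ) ≠ m ^ 2 := by
  intro m h
  apply hnsq
  refine ⟨m.natAbs, ?_⟩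
  have := congrArg Int.natAbs h
  simpa [Int.natAbs_pow, pow_two, Int.natAbs_mul] using this

lemma r_ne_int (N : ℕ) (hnsq : ¬ ∃ m : ℕ, N = m * m) (P Q m : ℤ) (hQ : (Q : ℝ) ≠ 0) :
    ((P : ℝ) + Real.sqrt N) / Q ≠ (m : ℝ) := by
  intro h
  have hx : Real.sqrt N = ((m * Q - P : ℤ) : ℝ) := by
    field_simp at h
    push_cast
    linarith
  exact (sqrtN_irr N hnsq).ne_int (m * Q - P) hx

lemma step_all (N : ℕ) (hN : 2 ≤ N) (hnsq : ¬ ∃ m : ℕ, N = m * m) (k : ℕ)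
    (hQpos : 0 < aQ N k) (hdvd : aQ N k ∣ ((N : ℤ) - aP N k ^ 2))
    (hred : 1 ≤ k → 1 < ar N k ∧ -1 < ar' N k ∧ ar' N k < 0) :
    (0 < aQ N (k+1) ∧ aQ N (k+1) ∣ ((N : ℤ) - aP N (k+1) ^ 2) ∧
      1 < ar N (k+1) ∧ -1 < ar' N (k+1) ∧ ar' N (k+1) < 0) ∧
    aQ N k * aQ N (k+1) = (N : ℤ) - aP N (k+1) ^ 2 ∧
    ar N (k+1) = 1 / (ar N k - (aa N k : ℝ)) ∧
    ar' N (k+1) = 1 / (ar' N k - (aa N k : ℝ)) ∧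
    (0 < ar N k - (aa N k : ℝ) ∧ ar N k - (aa N k : ℝ) < 1) ∧
    1 ≤ aa N k := by
  have hirr := sqrtN_irr N hnsq
  set x := Real.sqrt N with hxdef
  have hx2 : x ^ 2 = (N : ℝ) := Real.sq_sqrt (by positivity)
  have hx1 : 1 < x := by
    nlinarith [Real.sqrt_nonneg (N : ℝ), (show (2:ℝ) ≤ (N:ℝ) by exact_mod_cast hN)]
  have hNsq := NneSq N hnsq
  have hQne : (aQ N k : ℝ) ≠ 0 := by exact_mod_cast hQpos.ne'
  have hdvd2 : aQ N k ∣ ((N : ℤ) - aP N (k+1) ^ 2) := by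
    have hE : ((N : ℤ) - aP N (k+1) ^ 2) =
        ((N : ℤ) - aP N k ^ 2) + aQ N k * (2 * aa N k * aP N k - aa N k ^ 2 * aQ N k) := by
      rw [aP_succ]; ring
    rw [hE]; exact dvd_add hdvd (Dvd.intro _ rfl)
  have hrel : aQ N k * aQ N (k+1) = (N : ℤ) - aP N (k+1) ^ 2 := by
    rw [aQ_succ]; exact Int.mul_ediv_cancel' hdvd2
  have hQ1ne : aQ N (k+1) ≠ 0 := by
    intro h0
    rw [h0, mul_zero] at hrel
    exact hNsq (aP N (k+1)) (by linarith)
  have hQ1neR : (aQ N (k+1) : ℝ) ≠ 0 := by exact_mod_cast hQ1ne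
  have hd : ar N k - (aa N k : ℝ) = (x - (aP N (k+1) : ℝ)) / (aQ N k : ℝ) := by
    unfold ar; rw [aP_succ]; push_cast; field_simp; ring
  have hstep_r : ar N (k+1) = 1 / (ar N k - (aa N k : ℝ)) := by
    have hk := anth_key x N (aP N (k+1)) (aQ N k) (aQ N (k+1)) hx2 hQne hQ1neR hrel
    show ((aP N (k+1) : ℝ) + x) / (aQ N (k+1) : ℝ) = _
    rw [hk, hd, one_div_div]
  have hx2' : (-x) ^ 2 = (N : ℝ) := by rw [neg_pow]; simpa using hx2
  have hd' : ar' N k - (aa N k : ℝ) = (-x - (aP N (k+1) : ℝ)) / (aQ N k : ℝ) := by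
    unfold ar'; rw [aP_succ]; push_cast; field_simp; ring
  have hstep_r' : ar' N (k+1) = 1 / (ar' N k - (aa N k : ℝ)) := by
    have hk := anth_key (-x) N (aP N (k+1)) (aQ N k) (aQ N (k+1)) hx2' hQne hQ1neR hrel
    show ((aP N (k+1) : ℝ) - x) / (aQ N (k+1) : ℝ) = _
    rw [show ((aP N (k+1) : ℝ) - x) = ((aP N (k+1) : ℝ) + -x) by ring, hk, hd', one_div_div]
  have hfloor : aa N k = ⌊ar N k⌋ := rfl
  have hfrac1 : (aa N k : ℝ) ≤ ar N k := by rw [hfloor]; exact Int.floor_le _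
  have hfracne : ar N k ≠ (aa N k : ℝ) := r_ne_int N hnsq _ _ _ hQne
  have hfrac0 : 0 < ar N k - (aa N k : ℝ) :=
    sub_pos.mpr (lt_of_le_of_ne hfrac1 (Ne.symm hfracne))
  have hfrac2 : ar N k - (aa N k : ℝ) < 1 := by
    have := Int.lt_floor_add_one (ar N k); rw [← hfloor] at this; linarith
  have hr1 : 1 < ar N (k+1) := by
    rw [hstep_r, lt_div_iff₀ hfrac0, one_mul]; exact hfrac2
  have har0 : ar N 0 = x := by unfold ar; simp [aP_zero, aQ_zero, hxdef]
  have ha1 : 1 ≤ aa N k := by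
    rcases Nat.eq_zero_or_pos k with hk0 | hk1
    · subst hk0; rw [hfloor, har0]; exact Int.le_floor.mpr (by exact_mod_cast hx1.le)
    · rw [hfloor]; exact Int.le_floor.mpr (by exact_mod_cast (hred hk1).1.le)
  have ha1R : (1 : ℝ) ≤ (aa N k : ℝ) := by exact_mod_cast ha1
  have hr'lt : ar' N k - (aa N k : ℝ) < -1 := by
    rcases Nat.eq_zero_or_pos k with hk0 | hk1
    · subst hk0
      have h0 : ar' N 0 = -x := by unfold ar'; simp [aP_zero, aQ_zero, hxdef]
      rw [h0]; linarith
    · have h := (hred hk1).2.2; linarith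
  have hr'1a : -1 < ar' N (k+1) := by
    rw [hstep_r', lt_div_iff_of_neg (by linarith : ar' N k - (aa N k : ℝ) < 0)]
    linarith
  have hr'1b : ar' N (k+1) < 0 := by
    rw [hstep_r']; exact div_neg_of_pos_of_neg one_pos (by linarith)
  have hsub : ar N (k+1) - ar' N (k+1) = 2 * x / (aQ N (k+1) : ℝ) := by
    unfold ar ar'; rw [← hxdef, div_sub_div_same]; ring_nf
  have hQpos1 : 0 < aQ N (k+1) := by
    have h2x : 0 < 2 * x / (aQ N (k+1) : ℝ) := by rw [← hsub]; linarith
    rcases div_pos_iff.mp h2x with ⟨_, h⟩ | ⟨h, _⟩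
    · exact_mod_cast h
    · linarith
  exact ⟨⟨hQpos1, ⟨aQ N k, by rw [← hrel]; ring⟩, hr1, hr'1a, hr'1b⟩,
    hrel, hstep_r, hstep_r', ⟨hfrac0, hfrac2⟩, ha1⟩

lemma inv_all (N : ℕ) (hN : 2 ≤ N) (hnsq : ¬ ∃ m : ℕ, N = m * m) : ∀ k,
    0 < aQ N k ∧ aQ N k ∣ ((N : ℤ) - aP N k ^ 2) ∧
      (1 ≤ k → 1 < ar N k ∧ -1 < ar' N k ∧ ar' N k < 0) := by
  intro k
  induction k with
  | zero => exact ⟨by norm_num [aQ_zero], by simp [aQ_zero], by omega⟩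
  | succ k ih =>
    obtain ⟨h1, h2, h3, h4, h5⟩ := (step_all N hN hnsq k ih.1 ih.2.1 ih.2.2).1
    exact ⟨h1, h2, fun _ => ⟨h3, h4, h5⟩⟩

lemma facts_all (N : ℕ) (hN : 2 ≤ N) (hnsq : ¬ ∃ m : ℕ, N = m * m) (k : ℕ) :
    aQ N k * aQ N (k+1) = (N : ℤ) - aP N (k+1) ^ 2 ∧
    ar N (k+1) = 1 / (ar N k - (aa N k : ℝ)) ∧
    ar' N (k+1) = 1 / (ar' N k - (aa N k : ℝ)) ∧
    (0 < ar N k - (aa N k : ℝ) ∧ ar N k - (aa N k : ℝ) < 1) ∧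
    1 ≤ aa N k := by
  obtain ⟨h1, h2, h3⟩ := inv_all N hN hnsq k
  exact (step_all N hN hnsq k h1 h2 h3).2

lemma bounds_all (N : ℕ) (hN : 2 ≤ N) (hnsq : ¬ ∃ m : ℕ, N = m * m) (k : ℕ) (hk : 1 ≤ k) :
    -(N : ℤ) < aP N k ∧ aP N k < N ∧ 0 < aQ N k ∧ aQ N k < 2 * N := by
  obtain ⟨hQpos, _, hred⟩ := inv_all N hN hnsq k
  obtain ⟨hr1, hr'a, hr'b⟩ := hred hk
  set x := Real.sqrt N with hxdef
  have hx2 : x ^ 2 = (N : ℝ) := Real.sq_sqrt (by positivity)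
  have hx1 : 1 < x := by
    nlinarith [Real.sqrt_nonneg (N : ℝ), (show (2:ℝ) ≤ (N:ℝ) by exact_mod_cast hN)]
  have hxN : x < N := by nlinarith
  have hQR : (0 : ℝ) < (aQ N k : ℝ) := by exact_mod_cast hQpos
  have hsub : ar N k - ar' N k = 2 * x / (aQ N k : ℝ) := by
    unfold ar ar'; rw [← hxdef, div_sub_div_same]; ring_nf
  have h2x : 1 < 2 * x / (aQ N k : ℝ) := by rw [← hsub]; linarith
  have hQlt : (aQ N k : ℝ) < 2 * (N : ℝ) := by
    rw [lt_div_iff₀ hQR, one_mul] at h2x; linarith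
  have hPx : (aP N k : ℝ) < x := by
    have : (aP N k : ℝ) - x < 0 := by
      by_contra h
      push_neg at h
      have : 0 ≤ ar' N k := div_nonneg (by linarith) hQR.le
      linarith
    linarith
  have hQlt2x : (aQ N k : ℝ) < 2 * x := by
    rw [lt_div_iff₀ hQR, one_mul] at h2x; linarith
  have hPgt : -(N : ℝ) < (aP N k : ℝ) := by
    have h2 : -1 * (aQ N k : ℝ) < (aP N k : ℝ) - x := by
      have hthis := hr'a
      unfold ar' at hthis
      rw [lt_div_iff₀ hQR] at hthis
      linarith
    linarith
  refine ⟨by exact_mod_cast hPgt, by exact_mod_cast (lt_trans hPx hxN), hQpos, ?_⟩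
  exact_mod_cast hQlt

lemma back_step (N : ℕ) (hN : 2 ≤ N) (hnsq : ¬ ∃ m : ℕ, N = m * m) (k m : ℕ)
    (hk : 1 ≤ k) (hm : 1 ≤ m) (h : anthPQ N (k+1) = anthPQ N (m+1)) :
    anthPQ N k = anthPQ N m := by
  have hirr := sqrtN_irr N hnsq
  set x := Real.sqrt N with hxdef
  have hx1 : 1 < x := by
    have hx2 : x ^ 2 = (N : ℝ) := Real.sq_sqrt (by positivity)
    nlinarith [Real.sqrt_nonneg (N : ℝ), (show (2:ℝ) ≤ (N:ℝ) by exact_mod_cast hN)]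
  have hPe : aP N (k+1) = aP N (m+1) := by unfold aP; rw [h]
  have hQe : aQ N (k+1) = aQ N (m+1) := by unfold aQ; rw [h]
  have hre : ar N (k+1) = ar N (m+1) := by unfold ar; rw [hPe, hQe]
  have hr'e : ar' N (k+1) = ar' N (m+1) := by unfold ar'; rw [hPe, hQe]
  obtain ⟨_, hsr_k, hsr'_k, _, _⟩ := facts_all N hN hnsq k
  obtain ⟨_, hsr_m, hsr'_m, _, _⟩ := facts_all N hN hnsq m
  have e1 : ar N k - (aa N k : ℝ) = 1 / ar N (k+1) := by rw [hsr_k, one_div_one_div]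
  have e2 : ar N m - (aa N m : ℝ) = 1 / ar N (m+1) := by rw [hsr_m, one_div_one_div]
  have e1' : ar' N k - (aa N k : ℝ) = 1 / ar' N (k+1) := by rw [hsr'_k, one_div_one_div]
  have e2' : ar' N m - (aa N m : ℝ) = 1 / ar' N (m+1) := by rw [hsr'_m, one_div_one_div]
  have hred_k := (inv_all N hN hnsq k).2.2 hk
  have hred_m := (inv_all N hN hnsq m).2.2 hm
  have hdiff : ar' N k - ar' N m = (aa N k : ℝ) - (aa N m : ℝ) := by
    rw [hr'e] at e1'; linarith [e1', e2']
  have haaeq : aa N k = aa N m := by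
    have h1 : -1 < (aa N k : ℝ) - (aa N m : ℝ) := by
      rw [← hdiff]; linarith [hred_k.2.1, hred_k.2.2, hred_m.2.1, hred_m.2.2]
    have h2 : (aa N k : ℝ) - (aa N m : ℝ) < 1 := by
      rw [← hdiff]; linarith [hred_k.2.1, hred_k.2.2, hred_m.2.1, hred_m.2.2]
    have h1' : -1 < aa N k - aa N m := by exact_mod_cast h1
    have h2' : aa N k - aa N m < 1 := by exact_mod_cast h2
    omega
  have hrkm : ar N k = ar N m := by
    rw [hre] at e1
    have : (aa N k : ℝ) = (aa N m : ℝ) := by exact_mod_cast haaeq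
    linarith [e1, e2]
  have hr'km : ar' N k = ar' N m := by
    have : (aa N k : ℝ) = (aa N m : ℝ) := by exact_mod_cast haaeq
    linarith [hdiff]
  have hQkpos := (inv_all N hN hnsq k).1
  have hQmpos := (inv_all N hN hnsq m).1
  have hQkne : (aQ N k : ℝ) ≠ 0 := by exact_mod_cast hQkpos.ne'
  have hQmne : (aQ N m : ℝ) ≠ 0 := by exact_mod_cast hQmpos.ne'
  have hsubk : ar N k - ar' N k = 2 * x / (aQ N k : ℝ) := by
    unfold ar ar'; rw [← hxdef, div_sub_div_same]; ring_nf
  have hsubm : ar N m - ar' N m = 2 * x / (aQ N m : ℝ) := by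
    unfold ar ar'; rw [← hxdef, div_sub_div_same]; ring_nf
  have hQr : (aQ N k : ℝ) = (aQ N m : ℝ) := by
    have hdd : 2 * x / (aQ N k : ℝ) = 2 * x / (aQ N m : ℝ) := by
      rw [← hsubk, ← hsubm, hrkm, hr'km]
    rw [div_eq_div_iff hQkne hQmne] at hdd
    have h2x : (2 * x) ≠ 0 := by positivity
    exact (mul_left_cancel₀ h2x hdd).symm ▸ rfl
  have hQfin : aQ N k = aQ N m := by exact_mod_cast hQr
  have hPfin : aP N k = aP N m := by
    unfold ar at hrkm
    rw [hQr, div_eq_div_iff hQmne hQmne] at hrkm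
    have h' := mul_right_cancel₀ hQmne hrkm
    have : (aP N k : ℝ) = (aP N m : ℝ) := by linarith
    exact_mod_cast this
  exact Prod.ext hPfin hQfin

lemma anthPQ_succ_eq (N : ℕ) (m : ℕ) : anthPQ N (m+1) = anthStep N (anthPQ N m) := rfl

lemma period_exists (N : ℕ) (hN : 2 ≤ N) (hnsq : ¬ ∃ m : ℕ, N = m * m) :
    ∃ n : ℕ, 1 ≤ n ∧ ∀ k : ℕ, 1 ≤ k → anthPQ N (k + n) = anthPQ N k := by
  classical
  set S : Finset (ℤ × ℤ) :=
    (Finset.Ioo (-(N : ℤ)) (N : ℤ)) ×ˢ (Finset.Ioo 0 (2 * (N : ℤ))) with hS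
  have hmem : ∀ k : ℕ, anthPQ N (k + 1) ∈ S := by
    intro k
    obtain ⟨h1, h2, h3, h4⟩ := bounds_all N hN hnsq (k+1) (by omega)
    rw [hS, Finset.mem_product, Finset.mem_Ioo, Finset.mem_Ioo]
    exact ⟨⟨h1, h2⟩, h3, h4⟩
  obtain ⟨i, hi, j, hj, hne, heq⟩ :=
    Finset.exists_ne_map_eq_of_card_lt_of_maps_to
      (s := Finset.range (S.card + 1)) (t := S)
      (by simp) (fun k _ => hmem k)
  -- wlog i < j
  obtain ⟨i, j, hij, heq⟩ : ∃ i j : ℕ, i < j ∧ anthPQ N (i+1) = anthPQ N (j+1) := by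
    rcases hne.lt_or_gt with h | h
    · exact ⟨i, j, h, heq⟩
    · exact ⟨j, i, h, heq.symm⟩
  set n := j - i with hn
  have hn1 : 1 ≤ n := by omega
  have hdown : ∀ d, d ≤ i → anthPQ N ((i - d) + 1 + n) = anthPQ N ((i - d) + 1) := by
    intro d
    induction d with
    | zero =>
      intro _
      rw [show i - 0 + 1 + n = j + 1 by omega, show i - 0 + 1 = i + 1 by omega]
      exact heq.symm
    | succ d ih =>
      intro hd
      have hprev := ih (by omega)
      have hk1 : 1 ≤ i - d := by omega
      have h' : anthPQ N ((i - d + n) + 1) = anthPQ N ((i - d) + 1) := by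
        rw [show (i - d + n) + 1 = (i - d) + 1 + n by omega]; exact hprev
      have := back_step N hN hnsq (i - d + n) (i - d) (by omega) hk1 h'
      rw [show i - (d+1) + 1 + n = i - d + n by omega, show i - (d+1) + 1 = i - d by omega]
      exact this
  have hbase : anthPQ N (1 + n) = anthPQ N 1 := by
    have := hdown i le_rfl
    rwa [show i - i + 1 + n = 1 + n by omega, show i - i + 1 = 1 by omega] at this
  refine ⟨n, hn1, ?_⟩
  intro k hk
  induction k with
  | zero => omega
  | succ k ih =>
    rcases Nat.eq_zero_or_pos k with hk0 | hk1
    · subst hk0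
      rw [show 0 + 1 + n = 1 + n by omega, show 0 + 1 = 1 by omega]
      exact hbase
    · have hkk := ih hk1
      rw [show k + 1 + n = (k + n) + 1 by omega, anthPQ_succ_eq, anthPQ_succ_eq, hkk]

noncomputable def aT (N k : ℕ) : ℝ := ((aP N (k+1) : ℝ) + Real.sqrt N) / (aQ N k : ℝ)
noncomputable def aT' (N k : ℕ) : ℝ := ((aP N (k+1) : ℝ) - Real.sqrt N) / (aQ N k : ℝ)

lemma T_facts (N : ℕ) (hN : 2 ≤ N) (hnsq : ¬ ∃ m : ℕ, N = m * m) (k : ℕ) :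
    aT N k = -1 / ar' N (k+1) ∧ aT' N k = -1 / ar N (k+1) ∧
      1 < aT N k ∧ -1 < aT' N k ∧ aT' N k < 0 := by
  set x := Real.sqrt N with hxdef
  have hx2 : x ^ 2 = (N : ℝ) := Real.sq_sqrt (by positivity)
  have hQkpos := (inv_all N hN hnsq k).1
  have hQk1pos := (inv_all N hN hnsq (k+1)).1
  have hQkne : (aQ N k : ℝ) ≠ 0 := by exact_mod_cast hQkpos.ne'
  have hQk1ne : (aQ N (k+1) : ℝ) ≠ 0 := by exact_mod_cast hQk1pos.ne'
  have hrel := (facts_all N hN hnsq k).1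
  have hrel' : aQ N (k+1) * aQ N k = (N : ℤ) - aP N (k+1) ^ 2 := by rw [← hrel]; ring
  obtain ⟨hr1, hr'a, hr'b⟩ := (inv_all N hN hnsq (k+1)).2.2 (by omega)
  have h1 : aT N k = (aQ N (k+1) : ℝ) / (x - (aP N (k+1) : ℝ)) :=
    anth_key x N (aP N (k+1)) (aQ N (k+1)) (aQ N k) hx2 hQk1ne hQkne hrel'
  have hTa : aT N k = -1 / ar' N (k+1) := by
    show aT N k = -1 / (((aP N (k+1) : ℝ) - x) / (aQ N (k+1) : ℝ))
    rw [neg_div, one_div_div, ← div_neg, neg_sub]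
    exact h1
  have hx2' : (-x) ^ 2 = (N : ℝ) := by rw [neg_pow]; simpa using hx2
  have h2 : ((aP N (k+1) : ℝ) + -x) / (aQ N k : ℝ) = (aQ N (k+1) : ℝ) / (-x - (aP N (k+1) : ℝ)) :=
    anth_key (-x) N (aP N (k+1)) (aQ N (k+1)) (aQ N k) hx2' hQk1ne hQkne hrel'
  have hT'a : aT' N k = -1 / ar N (k+1) := by
    show aT' N k = -1 / (((aP N (k+1) : ℝ) + x) / (aQ N (k+1) : ℝ))
    rw [neg_div, one_div_div, ← div_neg]
    have e1 : aT' N k = ((aP N (k+1) : ℝ) + -x) / (aQ N k : ℝ) := by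
      unfold aT'; rw [← hxdef]; ring_nf
    rw [e1, h2]
    congr 1
    ring
  have hT1 : 1 < aT N k := by
    rw [hTa, neg_div, ← div_neg]
    exact one_lt_one_div (by linarith) (by linarith)
  have hr0 : 0 < ar N (k+1) := by linarith
  have hT'b : aT' N k < 0 := by
    rw [hT'a, neg_div]
    simp only [neg_lt, neg_zero]
    positivity
  have hT'c : -1 < aT' N k := by
    rw [hT'a, neg_div, neg_lt, neg_neg]
    rw [div_lt_one hr0]
    exact hr1
  exact ⟨hTa, hT'a, hT1, hT'c, hT'b⟩

lemma T_step (N : ℕ) (hN : 2 ≤ N) (hnsq : ¬ ∃ m : ℕ, N = m * m) (k : ℕ) :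
    aT N (k+1) = (aa N (k+1) : ℝ) + 1 / aT N k ∧
      aT' N (k+1) = (aa N (k+1) : ℝ) + 1 / aT' N k := by
  obtain ⟨hTa, hT'a, hT1, hT'c, hT'b⟩ := T_facts N hN hnsq k
  obtain ⟨hTa2, hT'a2, _, _, _⟩ := T_facts N hN hnsq (k+1)
  obtain ⟨_, hsr, hsr', _, _⟩ := facts_all N hN hnsq (k+1)
  obtain ⟨hr1, hr'a, hr'b⟩ := (inv_all N hN hnsq (k+1)).2.2 (by omega)
  have hrne : ar N (k+1) ≠ 0 := by linarith
  have hr'ne : ar' N (k+1) ≠ 0 := by linarith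
  have h5 : 1 / aT N k = -ar' N (k+1) := by
    rw [hTa]; field_simp
  have h6 : 1 / aT' N k = -ar N (k+1) := by
    rw [hT'a]; field_simp
  constructor
  · rw [hTa2, hsr', neg_div, one_div_one_div, h5]
    ring
  · rw [hT'a2, hsr, neg_div, one_div_one_div, h6]
    ring

lemma T_floor (N : ℕ) (hN : 2 ≤ N) (hnsq : ¬ ∃ m : ℕ, N = m * m) (k : ℕ) :
    ⌊aT N (k+1)⌋ = aa N (k+1) := by
  obtain ⟨hstep, _⟩ := T_step N hN hnsq k
  obtain ⟨_, _, hT1, _, _⟩ := T_facts N hN hnsq k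
  rw [hstep, Int.floor_intCast_add]
  have h0 : 0 < 1 / aT N k := by positivity
  have h1 : 1 / aT N k < 1 := by
    rw [div_lt_one (by linarith)]; exact hT1
  rw [Int.floor_eq_zero_iff.mpr ⟨h0.le, h1⟩, add_zero]

/-- `e` is the anthyphairesis remainder sequence of the pair `(a, b)`:
`e 0 = a`, `e 1 = b`, and each new remainder is obtained by division with
remainder of `e n` by `e (n+1)` (stopping, i.e. giving `0`, once a remainder vanishes). -/
def IsAnthSeq (a b : ℝ) (e : ℕ → ℝ) : Prop :=
  e 0 = a ∧ e 1 = b ∧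
    ∀ n : ℕ,
      (e (n + 1) ≠ 0 → e (n + 2) = e n - (⌊e n / e (n + 1)⌋ : ℝ) * e (n + 1)) ∧
      (e (n + 1) = 0 → e (n + 2) = 0)

/-- Palindromic periodicity of the anthyphairesis of `√N` to `1` for a
non-square `N ≥ 2`: the quotients are periodic with some period `n ≥ 1` from
the first step, the last quotient of the period is double the initial one,
and the period without its last term is a palindrome. -/
theorem anthyphairesis_sqrt_palindromic
    (N : ℕ) (hN : 2 ≤ N) (hnsq : ¬ ∃ m : ℕ, N = m * m)
    (e : ℕ → ℝ) (he : IsAnthSeq (Real.sqrt N) 1 e) :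
    (∀ n : ℕ, e n ≠ 0) ∧
    ∃ n : ℕ, 1 ≤ n ∧
      (∀ k : ℕ, 1 ≤ k → ⌊e (k + n) / e (k + n + 1)⌋ = ⌊e k / e (k + 1)⌋) ∧
      ⌊e n / e (n + 1)⌋ = 2 * ⌊e 0 / e 1⌋ ∧
      (∀ j : ℕ, 1 ≤ j → j < n →
        ⌊e j / e (j + 1)⌋ = ⌊e (n - j) / e (n - j + 1)⌋) := by
  have hirr := sqrtN_irr N hnsq
  set x := Real.sqrt N with hxdef
  have hx2 : x ^ 2 = (N : ℝ) := Real.sq_sqrt (by positivity)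
  have hx1 : 1 < x := by
    nlinarith [Real.sqrt_nonneg (N : ℝ), (show (2:ℝ) ≤ (N:ℝ) by exact_mod_cast hN)]
  have har0 : ar N 0 = x := by unfold ar; simp [aP_zero, aQ_zero, hxdef]
  have har'0 : ar' N 0 = -x := by unfold ar'; simp [aP_zero, aQ_zero, hxdef]
  have haa0 : aa N 0 = ⌊x⌋ := by
    rw [show aa N 0 = ⌊ar N 0⌋ from rfl, har0]
  -- connection with e
  obtain ⟨he0, he1, hrec⟩ := he
  have hE : ∀ k, 0 < e k ∧ 0 < e (k+1) ∧ e k / e (k+1) = ar N k := by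
    intro k
    induction k with
    | zero =>
      refine ⟨by rw [he0]; linarith, by rw [he1]; norm_num, ?_⟩
      rw [he0, he1, har0]; simp
    | succ k ih =>
      obtain ⟨h0, h1, h2⟩ := ih
      obtain ⟨_, hsr, _, ⟨hf0, hf1⟩, _⟩ := facts_all N hN hnsq k
      have hfl : ⌊e k / e (k+1)⌋ = aa N k := by rw [h2]; rfl
      have he2 : e (k+2) = e k - (aa N k : ℝ) * e (k+1) := by
        rw [← hfl]; exact (hrec k).1 h1.ne'
      have hek : e k = ar N k * e (k+1) := by
        rw [← h2, div_mul_cancel₀ _ h1.ne']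
      have he2' : e (k+2) = (ar N k - (aa N k : ℝ)) * e (k+1) := by
        rw [he2, hek]; ring
      have hpos2 : 0 < e (k+2) := by rw [he2']; exact mul_pos hf0 h1
      refine ⟨h1, hpos2, ?_⟩
      rw [he2', hsr, mul_comm, div_mul_eq_div_div, div_self h1.ne']
  have hfloorE : ∀ k, ⌊e k / e (k+1)⌋ = aa N k := by
    intro k; rw [(hE k).2.2]; rfl
  refine ⟨fun m => (hE m).1.ne', ?_⟩
  obtain ⟨n, hn1, hper⟩ := period_exists N hN hnsq
  have hPper : ∀ k, 1 ≤ k → aP N (k + n) = aP N k := by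
    intro k hk; unfold aP; rw [hper k hk]
  have hQper : ∀ k, 1 ≤ k → aQ N (k + n) = aQ N k := by
    intro k hk; unfold aQ; rw [hper k hk]
  have haper : ∀ k, 1 ≤ k → aa N (k + n) = aa N k := by
    intro k hk; unfold aa; rw [hPper k hk, hQper k hk]
  -- quotient at end of period, and identification of r_n
  have hrn1 : ar N (n+1) = ar N 1 := by
    unfold ar aP aQ; rw [show n + 1 = 1 + n by omega, hper 1 le_rfl]
  have hr'n1 : ar' N (n+1) = ar' N 1 := by
    unfold ar' aP aQ; rw [show n + 1 = 1 + n by omega, hper 1 le_rfl]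
  obtain ⟨_, hsrn, hsr'n, _, _⟩ := facts_all N hN hnsq n
  obtain ⟨_, hsr0, hsr'0, _, _⟩ := facts_all N hN hnsq 0
  have e_n : ar N n - (aa N n : ℝ) = 1 / ar N 1 := by
    rw [← hrn1, hsrn, one_div_one_div]
  have e_0 : ar N 0 - (aa N 0 : ℝ) = 1 / ar N 1 := by
    rw [hsr0, one_div_one_div]
  have e'_n : ar' N n - (aa N n : ℝ) = 1 / ar' N 1 := by
    rw [← hr'n1, hsr'n, one_div_one_div]
  have e'_0 : ar' N 0 - (aa N 0 : ℝ) = 1 / ar' N 1 := by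
    rw [hsr'0, one_div_one_div]
  have hred_n := (inv_all N hN hnsq n).2.2 hn1
  have hfl_le : (aa N 0 : ℝ) ≤ x := by
    rw [haa0]; push_cast; exact Int.floor_le x
  have hfl_lt : x < (aa N 0 : ℝ) + 1 := by
    rw [haa0]; push_cast; exact Int.lt_floor_add_one x
  have key2 : aa N n = 2 * aa N 0 := by
    have h1 : ((aa N n - 2 * aa N 0 : ℤ) : ℝ) = ar' N n + x - (aa N 0 : ℝ) := by
      rw [har'0] at e'_0
      push_cast
      linarith [e'_n, e'_0]
    have hb1 : (-1 : ℝ) < ((aa N n - 2 * aa N 0 : ℤ) : ℝ) := by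
      rw [h1]; linarith [hred_n.2.1]
    have hb2 : ((aa N n - 2 * aa N 0 : ℤ) : ℝ) < 1 := by
      rw [h1]; linarith [hred_n.2.2]
    have hb1' : (-1 : ℤ) < aa N n - 2 * aa N 0 := by exact_mod_cast hb1
    have hb2' : aa N n - 2 * aa N 0 < 1 := by exact_mod_cast hb2
    omega
  have harn : ar N n = (aa N 0 : ℝ) + x := by
    have hc : (aa N n : ℝ) = 2 * (aa N 0 : ℝ) := by exact_mod_cast key2
    rw [har0] at e_0
    linarith [e_n, e_0]
  have hQnpos := (inv_all N hN hnsq n).1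
  have hQnne : (aQ N n : ℝ) ≠ 0 := by exact_mod_cast hQnpos.ne'
  have hid := anth_unique x hirr (aP N n) (aQ N n) (aa N 0) 1 hQnne (by norm_num)
    (by show ar N n = _; rw [harn]; push_cast; rw [div_one])
  have hPn : aP N n = aa N 0 := hid.1
  have hQn : aQ N n = 1 := hid.2
  have hP1 : aP N 1 = aa N 0 := by
    rw [show (1:ℕ) = 0 + 1 from rfl, aP_succ, aP_zero, aQ_zero, mul_one, sub_zero]
  -- the palindrome structure
  have pal : ∀ i, i ≤ n - 1 → aP N (n - i) = aP N (i+1) ∧ aQ N (n - i) = aQ N i := by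
    intro i
    induction i with
    | zero =>
      intro _
      rw [Nat.sub_zero]
      exact ⟨by rw [hPn, ← hP1], by rw [hQn, aQ_zero]⟩
    | succ i ih =>
      intro hi
      obtain ⟨hPi, hQi⟩ := ih (by omega)
      obtain ⟨m, hm⟩ : ∃ m, n - i = m + 2 := ⟨n - i - 2, by omega⟩
      rw [hm] at hPi hQi
      have hrT : ar N (m+2) = aT N i := by unfold ar aT; rw [hPi, hQi]
      have hr'T : ar' N (m+2) = aT' N i := by unfold ar' aT'; rw [hPi, hQi]
      obtain ⟨_, hsrm, hsr'm, _, _⟩ := facts_all N hN hnsq (m+1)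
      obtain ⟨hTs, hT's⟩ := T_step N hN hnsq i
      have em : ar N (m+1) - (aa N (m+1) : ℝ) = 1 / ar N (m+2) := by
        rw [hsrm, one_div_one_div]
      have em' : ar' N (m+1) - (aa N (m+1) : ℝ) = 1 / ar' N (m+2) := by
        rw [hsr'm, one_div_one_div]
      have eT : aT N (i+1) = (aa N (i+1) : ℝ) + 1 / ar N (m+2) := by
        rw [hTs, hrT]
      have eT' : aT' N (i+1) = (aa N (i+1) : ℝ) + 1 / ar' N (m+2) := by
        rw [hT's, hr'T]
      have hredm := (inv_all N hN hnsq (m+1)).2.2 (by omega)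
      obtain ⟨_, _, _, hT'c, hT'b⟩ := T_facts N hN hnsq (i+1)
      have hdz : ar' N (m+1) - aT' N (i+1) = ((aa N (m+1) - aa N (i+1) : ℤ) : ℝ) := by
        push_cast
        linarith [em', eT']
      have haaeq : aa N (m+1) = aa N (i+1) := by
        have hb1 : (-1 : ℝ) < ((aa N (m+1) - aa N (i+1) : ℤ) : ℝ) := by
          rw [← hdz]; linarith [hredm.2.1, hredm.2.2]
        have hb2 : ((aa N (m+1) - aa N (i+1) : ℤ) : ℝ) < 1 := by
          rw [← hdz]; linarith [hredm.2.1, hredm.2.2]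
        have hb1' : (-1 : ℤ) < aa N (m+1) - aa N (i+1) := by exact_mod_cast hb1
        have hb2' : aa N (m+1) - aa N (i+1) < 1 := by exact_mod_cast hb2
        omega
      have hreq : ar N (m+1) = aT N (i+1) := by
        have hc : (aa N (m+1) : ℝ) = (aa N (i+1) : ℝ) := by exact_mod_cast haaeq
        linarith [em, eT]
      have hQm1pos := (inv_all N hN hnsq (m+1)).1
      have hQi1pos := (inv_all N hN hnsq (i+1)).1
      have hid2 := anth_unique x hirr (aP N (m+1)) (aQ N (m+1)) (aP N (i+2)) (aQ N (i+1))
        (by exact_mod_cast hQm1pos.ne') (by exact_mod_cast hQi1pos.ne') hreq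
      rw [show n - (i+1) = m + 1 by omega]
      exact ⟨hid2.1, hid2.2⟩
  refine ⟨n, hn1, ?_, ?_, ?_⟩
  · intro k hk
    rw [hfloorE, hfloorE]
    exact haper k hk
  · have h0 : ⌊e 0 / e 1⌋ = aa N 0 := hfloorE 0
    rw [hfloorE n, h0]
    exact key2
  · intro j hj1 hjn
    have hile : n - j ≤ n - 1 := by omega
    obtain ⟨hPj, hQj⟩ := pal (n - j) hile
    rw [show n - (n - j) = j by omega] at hPj hQj
    obtain ⟨i', hi'⟩ : ∃ i', n - j = i' + 1 := ⟨n - j - 1, by omega⟩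
    rw [hfloorE j, hfloorE (n - j)]
    have h2 : ar N j = aT N (n - j) := by unfold ar aT; rw [hPj, hQj]
    have h3 : aa N j = ⌊ar N j⌋ := rfl
    rw [h3, h2, hi', T_floor N hN hnsq i', ← hi']
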